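/- Let V : ℝ → ℝ be measurable and ε > 0. For every probability density u on ℝ with finite second moment such that ∫_ℝ V(x)u(x)dx is well defined, Υ_ε^-(u) ≥ −ε/4 − 4ε e⁻¹ + ∫_ℝ (V(x) − (ε/4)x²) u(x) dx. -/
import Mathlib


open MeasureTheory Real

/-- A probability density on `ℝ`. -/
def IsProbDensity (u : ℝ → ℝ) : Prop :=
  Measurable u ∧ (∀ x, 0 ≤ u x) ∧ (∫ x : ℝ, u x) = 1

/-- The truncated free energy `Υ_ε^-(u)`. -/
noncomputable def freeEnergyMinus (V : ℝ → ℝ) (ε : ℝ) (u : ℝ → ℝ) : ℝ :=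
  ε / 2 * (∫ x : ℝ, if u x < 1 then u x * Real.log (u x) else 0)
    + ∫ x : ℝ, V x * u x

lemma mul_log_ge (a b : ℝ) (ha : 0 ≤ a) (hb : 0 < b) :
    a * Real.log b + a - b ≤ a * Real.log a := by
  rcases eq_or_lt_of_le ha with h | h
  · simp [← h]; positivity
  · have := Real.log_le_sub_one_of_pos (show 0 < b / a by positivity)
    rw [Real.log_div (ne_of_gt hb) (ne_of_gt h)] at this
    have := mul_le_mul_of_nonneg_left this (le_of_lt h)
    have hba : a * (b / a) = b := by field_simp
    nlinarith

theorem stmt7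
    (V : ℝ → ℝ) (hVmeas : Measurable V) (ε : ℝ) (hε : 0 < ε)
    (u : ℝ → ℝ) (hu : IsProbDensity u)
    (hmom : Integrable (fun x : ℝ => x ^ 2 * u x))
    (hVu : Integrable (fun x : ℝ => V x * u x)) :
    -(ε / 4) - 4 * ε * Real.exp (-1)
        + (∫ x : ℝ, (V x - ε / 4 * x ^ 2) * u x)
      ≤ freeEnergyMinus V ε u := by
  obtain ⟨humeas, hunn, huint⟩ := hu
  set f : ℝ → ℝ := fun x => if u x < 1 then u x * Real.log (u x) else 0 with hf
  set g : ℝ → ℝ := fun x => -(x ^ 2 / 2 * u x) - Real.exp (-(x ^ 2 / 2)) with hg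
  -- pointwise bound g ≤ f
  have hpw : ∀ x, g x ≤ f x := by
    intro x
    simp only [hf, hg]
    split_ifs with h
    · have h1 := mul_log_ge (u x) (Real.exp (-(x ^ 2 / 2))) (hunn x)
        (Real.exp_pos _)
      rw [Real.log_exp] at h1
      have := hunn x
      nlinarith
    · have h1 : 0 ≤ x ^ 2 / 2 * u x := mul_nonneg (by positivity) (hunn x)
      have h2 := (Real.exp_pos (-(x ^ 2 / 2))).le
      linarith
  have hfle : ∀ x, f x ≤ 0 := by
    intro x
    simp only [hf]
    split_ifs with h
    · exact mul_nonpos_of_nonneg_of_nonpos (hunn x)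
        (Real.log_nonpos (hunn x) h.le)
    · exact le_refl 0
  -- integrability of the gaussian
  have hgauss : Integrable (fun x : ℝ => Real.exp (-(x ^ 2 / 2))) := by
    have : (fun x : ℝ => Real.exp (-(x ^ 2 / 2)))
        = fun x : ℝ => Real.exp (-(1/2 : ℝ) * x ^ 2) := by
      funext x; ring_nf
    rw [this]
    exact integrable_exp_neg_mul_sq (by norm_num)
  have hhalf : Integrable (fun x : ℝ => x ^ 2 / 2 * u x) := by
    have h : (fun x : ℝ => x ^ 2 / 2 * u x) = fun x : ℝ => (1/2 : ℝ) * (x ^ 2 * u x) := by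
      funext x; ring
    rw [h]; exact hmom.const_mul _
  have hg_int : Integrable g := (hhalf.neg).sub hgauss
  have hf_int : Integrable f := by
    refine Integrable.mono' (g := fun x => x ^ 2 / 2 * u x + Real.exp (-(x ^ 2 / 2)))
      ?_ ?_ ?_
    · exact hhalf.add hgauss
    · apply Measurable.aestronglyMeasurable
      apply Measurable.ite (measurableSet_lt humeas measurable_const)
        (humeas.mul (humeas.log)) measurable_const
    · refine Filter.Eventually.of_forall fun x => ?_
      rw [Real.norm_eq_abs, abs_of_nonpos (hfle x)]
      have := hpw x
      simp only [hg] at this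
      linarith
  -- integral comparison
  have hI : ∫ x, g x ≤ ∫ x, f x := integral_mono hg_int hf_int hpw
  have hgval : ∫ x, g x = -(1/2) * (∫ x, x ^ 2 * u x) - Real.sqrt (2 * Real.pi) := by
    have hfun : (fun x => g x) = fun x : ℝ => ((-(1/2) : ℝ) * (x ^ 2 * u x))
        - Real.exp (-(1/2 : ℝ) * x ^ 2) := by
      funext x; simp only [hg]; ring_nf
    rw [hfun]
    rw [integral_sub (hmom.const_mul ((-(1/2)) : ℝ))
      (integrable_exp_neg_mul_sq (by norm_num : (0:ℝ) < 1/2))]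
    rw [integral_const_mul, integral_gaussian]
    have : Real.sqrt (Real.pi / (1/2)) = Real.sqrt (2 * Real.pi) := by
      congr 1; ring
    rw [this]
  -- split the RHS integral
  have hsplit : (∫ x : ℝ, (V x - ε / 4 * x ^ 2) * u x)
      = (∫ x : ℝ, V x * u x) - ε / 4 * (∫ x, x ^ 2 * u x) := by
    rw [show (fun x : ℝ => (V x - ε / 4 * x ^ 2) * u x)
        = fun x : ℝ => V x * u x - ε / 4 * (x ^ 2 * u x) by funext x; ring]
    rw [integral_sub hVu (hmom.const_mul _), integral_const_mul]
  -- numeric bound : sqrt (2π) ≤ 1/2 + 8 exp (-1)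
  have hnum : Real.sqrt (2 * Real.pi) ≤ 1/2 + 8 * Real.exp (-1) := by
    have h1 : Real.sqrt (2 * Real.pi) ≤ 3 := by
      rw [show (3 : ℝ) = Real.sqrt 9 by
        rw [show (9 : ℝ) = 3 ^ 2 by norm_num, Real.sqrt_sq]; norm_num]
      apply Real.sqrt_le_sqrt
      nlinarith [Real.pi_lt_d2]
    have h2 : (5/16 : ℝ) ≤ Real.exp (-1) := by
      rw [Real.exp_neg]
      rw [show (5/16 : ℝ) = (16/5 : ℝ)⁻¹ by norm_num]
      apply inv_anti₀ (Real.exp_pos 1)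
      linarith [Real.exp_one_lt_d9.le]
    linarith
  have hMnn : 0 ≤ ∫ x, x ^ 2 * u x :=
    integral_nonneg fun x => mul_nonneg (sq_nonneg x) (hunn x)
  rw [freeEnergyMinus, hsplit]
  have hFin : -(1/2) * (∫ x, x ^ 2 * u x) - Real.sqrt (2 * Real.pi) ≤ ∫ x, f x := by
    rw [← hgval]; exact hI
  have hexpnn := (Real.exp_pos (-1 : ℝ)).le
  nlinarith [mul_le_mul_of_nonneg_left hFin (by linarith : (0:ℝ) ≤ ε / 2),
    mul_le_mul_of_nonneg_left hnum (by linarith : (0:ℝ) ≤ ε / 2)]
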